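/- Let $0 < r < 1$, $k \ge 3$ an integer, and $u \in C[0,1]$ with discrete Besov seminorm $[[u]]^2_{\Lambda} = \sum_{m=0}^{\infty} r^{-m} \sum_{l=0}^{k^m-1}(u(l/k^m) - u((l+1)/k^m))^2 < \infty$. Suppose $u$ is supported in an interval of length at most $k^{-M}$ for some $M \ge 1$. Then there exists a constant $C > 0$ depending only on $r$ (not on $u$, $M$) such that $[[u]]^2_{\Lambda} \le C \cdot \sum_{i=1}^{k^M} [[u]]^2_{\Lambda([\frac{i-1}{k^M}, \frac{i}{k^M}])}$, where $[[u]]_{\Lambda(I)}$ denotes the appropriately scaled Besov seminorm of $u$ restricted to subinterval $I$. -/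

import Mathlib

/-- The squared discrete Besov seminorm of `u` on `[0,1]`, with weight `r⁻ᵐ` at level `m`. -/
noncomputable def besovSq (r : ℝ) (k : ℕ) (u : ℝ → ℝ) : ℝ :=
  ∑' m : ℕ, (1 / r) ^ m * ∑ l ∈ Finset.range (k ^ m),
    (u ((l : ℝ) / (k : ℝ) ^ m) - u (((l : ℝ) + 1) / (k : ℝ) ^ m)) ^ 2

/-- The appropriately scaled squared Besov seminorm of `u` on the subinterval
`[(i-1)/k^M, i/k^M]`. -/
noncomputable def besovLocSq (r : ℝ) (k M i : ℕ) (u : ℝ → ℝ) : ℝ :=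
  ∑' m : ℕ, (1 / r) ^ (M + m) * ∑ l ∈ Finset.range (k ^ m),
    (u (((i : ℝ) - 1) / (k : ℝ) ^ M + (l : ℝ) / (k : ℝ) ^ (M + m)) -
      u (((i : ℝ) - 1) / (k : ℝ) ^ M + ((l : ℝ) + 1) / (k : ℝ) ^ (M + m))) ^ 2

/-- Level-`m` squared difference sum of `u` on `[0,1]`. -/
noncomputable def Sfun (k : ℕ) (u : ℝ → ℝ) (m : ℕ) : ℝ :=
  ∑ l ∈ Finset.range (k ^ m),
    (u ((l : ℝ) / (k : ℝ) ^ m) - u (((l : ℝ) + 1) / (k : ℝ) ^ m)) ^ 2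

/-- Local level-`m` squared difference sum of `u` on the `i`-th subinterval. -/
noncomputable def Lfun (k M : ℕ) (u : ℝ → ℝ) (i m : ℕ) : ℝ :=
  ∑ l ∈ Finset.range (k ^ m),
    (u (((i : ℝ) - 1) / (k : ℝ) ^ M + (l : ℝ) / (k : ℝ) ^ (M + m)) -
      u (((i : ℝ) - 1) / (k : ℝ) ^ M + ((l : ℝ) + 1) / (k : ℝ) ^ (M + m))) ^ 2

lemma besovSq_eq (r : ℝ) (k : ℕ) (u : ℝ → ℝ) :
    besovSq r k u = ∑' m : ℕ, (1 / r) ^ m * Sfun k u m := rfl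

lemma besovLocSq_eq (r : ℝ) (k M i : ℕ) (u : ℝ → ℝ) :
    besovLocSq r k M i u = ∑' m : ℕ, (1 / r) ^ (M + m) * Lfun k M u i m := rfl

lemma sum_range_mul' (f : ℕ → ℝ) (a b : ℕ) :
    ∑ l ∈ Finset.range (a * b), f l
      = ∑ i ∈ Finset.range a, ∑ j ∈ Finset.range b, f (i * b + j) := by
  induction a with
  | zero => simp
  | succ n ih =>
    rw [Finset.sum_range_succ, ← ih, Nat.succ_mul, Finset.sum_range_add]

lemma pt_eq (k M m i l : ℕ) (hk : (k : ℝ) ≠ 0) :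
    (i : ℝ) / (k : ℝ) ^ M + (l : ℝ) / (k : ℝ) ^ (M + m)
      = ((i * k ^ m + l : ℕ) : ℝ) / (k : ℝ) ^ (M + m) := by
  push_cast
  rw [pow_add]
  field_simp

lemma L_sum_eq (k M : ℕ) (hk : (k : ℝ) ≠ 0) (u : ℝ → ℝ) (m : ℕ) :
    ∑ i ∈ Finset.range (k ^ M), Lfun k M u (i + 1) m = Sfun k u (M + m) := by
  unfold Sfun Lfun
  have hn : k ^ (M + m) = k ^ M * k ^ m := pow_add k M m
  rw [hn, sum_range_mul' _ (k ^ M) (k ^ m)]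
  apply Finset.sum_congr rfl
  intro i _
  apply Finset.sum_congr rfl
  intro j _
  have h1 : ((i + 1 : ℕ) : ℝ) - 1 = (i : ℝ) := by push_cast; ring
  have h2 : (i : ℝ) / (k : ℝ) ^ M + (j : ℝ) / (k : ℝ) ^ (M + m)
      = ((i * k ^ m + j : ℕ) : ℝ) / (k : ℝ) ^ (M + m) := pt_eq k M m i j hk
  have h3 : (i : ℝ) / (k : ℝ) ^ M + ((j : ℝ) + 1) / (k : ℝ) ^ (M + m)
      = (((i * k ^ m + j : ℕ) : ℝ) + 1) / (k : ℝ) ^ (M + m) := by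
    push_cast
    rw [pow_add]
    field_simp
    ring
  rw [h1, h2, h3]

set_option maxHeartbeats 1000000 in
theorem stmt_3 (r : ℝ) (hr0 : 0 < r) (hr1 : r < 1) (k : ℕ) (hk : 3 ≤ k) :
    ∃ C : ℝ, 0 < C ∧ ∀ M : ℕ, 1 ≤ M → ∀ u : ℝ → ℝ, Continuous u →
      Summable (fun m : ℕ => (1 / r) ^ m * ∑ l ∈ Finset.range (k ^ m),
        (u ((l : ℝ) / (k : ℝ) ^ m) - u (((l : ℝ) + 1) / (k : ℝ) ^ m)) ^ 2) →
      (∃ a : ℝ, ∀ x ∈ Set.Icc (0:ℝ) 1, x ∉ Set.Icc a (a + ((k : ℝ) ^ M)⁻¹) → u x = 0) →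
      besovSq r k u ≤ C * ∑ i ∈ Finset.Icc 1 (k ^ M), besovLocSq r k M i u := by
  have h1r : 0 < 1 - r := by linarith
  refine ⟨32 / (1 - r) + 1, by positivity, ?_⟩
  intro M hM u _hu hsum hsupp
  obtain ⟨a, ha⟩ := hsupp
  have hkR : (0:ℝ) < (k : ℝ) := by exact_mod_cast (by omega : 0 < k)
  have hkR0 : ((k : ℝ)) ≠ 0 := ne_of_gt hkR
  have hr0' : r ≠ 0 := ne_of_gt hr0
  have hsumf : Summable (fun m => (1 / r) ^ m * Sfun k u m) := hsum
  have hfnn : ∀ m, 0 ≤ (1 / r) ^ m * Sfun k u m := fun m =>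
    mul_nonneg (pow_nonneg (by positivity) m) (Finset.sum_nonneg fun l _ => sq_nonneg _)
  have hLnn : ∀ i m, 0 ≤ Lfun k M u i m := fun i m =>
    Finset.sum_nonneg fun l _ => sq_nonneg _
  have htail : Summable (fun m => (1 / r) ^ (M + m) * Sfun k u (M + m)) := by
    have h := (summable_nat_add_iff M).mpr hsumf
    simpa [add_comm] using h
  have hLle : ∀ m, ∀ i ∈ Finset.range (k ^ M), Lfun k M u (i + 1) m ≤ Sfun k u (M + m) := by
    intro m i hi
    rw [← L_sum_eq k M hkR0 u m]
    exact Finset.single_le_sum (f := fun j => Lfun k M u (j + 1) m) (fun j _ => hLnn _ _) hi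
  have hLsm : ∀ i ∈ Finset.Icc 1 (k ^ M),
      Summable (fun m => (1 / r) ^ (M + m) * Lfun k M u i m) := by
    intro i hi
    obtain ⟨h1, h2⟩ := Finset.mem_Icc.mp hi
    obtain ⟨i', rfl⟩ : ∃ i', i = i' + 1 := ⟨i - 1, by omega⟩
    have hi' : i' ∈ Finset.range (k ^ M) := Finset.mem_range.mpr (by omega)
    apply Summable.of_nonneg_of_le (fun m => mul_nonneg (by positivity) (hLnn _ _)) _ htail
    intro m
    exact mul_le_mul_of_nonneg_left (hLle m i' hi') (by positivity)
  have hLocnn : ∀ i, 0 ≤ besovLocSq r k M i u := fun i => by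
    rw [besovLocSq_eq]
    exact tsum_nonneg fun m => mul_nonneg (by positivity) (hLnn _ _)
  set Sloc := ∑ i ∈ Finset.Icc 1 (k ^ M), besovLocSq r k M i u with hSlocdef
  have hSlocnn : 0 ≤ Sloc := Finset.sum_nonneg fun i _ => hLocnn i
  -- swap sum and tsum
  have hswap : Sloc = ∑' m, (1 / r) ^ (M + m) * Sfun k u (M + m) := by
    rw [hSlocdef]
    have h1 : ∀ i ∈ Finset.Icc 1 (k ^ M),
        besovLocSq r k M i u = ∑' m, (1 / r) ^ (M + m) * Lfun k M u i m :=
      fun i _ => besovLocSq_eq r k M i u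
    rw [Finset.sum_congr rfl h1, ← Summable.tsum_finsetSum hLsm]
    apply tsum_congr
    intro m
    rw [← Finset.mul_sum]
    congr 1
    rw [← L_sum_eq k M hkR0 u m, ← Finset.Ico_add_one_right_eq_Icc, Finset.sum_Ico_eq_sum_range]
    refine Finset.sum_congr (by congr 1 <;> omega) fun i _ => by rw [add_comm 1 i]
  -- split the global sum
  have hsplit : besovSq r k u = (∑ m ∈ Finset.range M, (1 / r) ^ m * Sfun k u m) + Sloc := by
    rw [besovSq_eq, ← Summable.sum_add_tsum_nat_add M hsumf, hswap]
    congr 1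
    apply tsum_congr
    intro m
    rw [add_comm m M]
  -- single interval difference bound
  have hD : ∀ i ∈ Finset.Icc 1 (k ^ M),
      (u (((i : ℝ) - 1) / (k : ℝ) ^ M) - u ((i : ℝ) / (k : ℝ) ^ M)) ^ 2 ≤ r ^ M * Sloc := by
    intro i hi
    have hs := hLsm i hi
    have h0 : (1 / r) ^ (M + 0) * Lfun k M u i 0
        ≤ ∑' m, (1 / r) ^ (M + m) * Lfun k M u i m :=
      Summable.le_tsum hs 0 (fun j _ => mul_nonneg (by positivity) (hLnn _ _))
    have hL0 : Lfun k M u i 0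
        = (u (((i : ℝ) - 1) / (k : ℝ) ^ M) - u ((i : ℝ) / (k : ℝ) ^ M)) ^ 2 := by
      unfold Lfun
      rw [pow_zero]
      rw [Finset.sum_range_one]
      have e1 : ((0 : ℕ) : ℝ) / (k : ℝ) ^ (M + 0) = 0 := by simp
      have e2 : ((i : ℝ) - 1) / (k : ℝ) ^ M + (((0 : ℕ) : ℝ) + 1) / (k : ℝ) ^ (M + 0)
          = (i : ℝ) / (k : ℝ) ^ M := by
        rw [add_zero]
        push_cast
        field_simp
        ring
      rw [e2, e1, add_zero]
    have hrpow : r ^ M * (1 / r) ^ (M + 0) = 1 := by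
      rw [add_zero, one_div, inv_pow, mul_inv_cancel₀ (pow_ne_zero M hr0')]
    have hLocle : besovLocSq r k M i u ≤ Sloc :=
      Finset.single_le_sum (fun j _ => hLocnn j) hi
    calc (u (((i : ℝ) - 1) / (k : ℝ) ^ M) - u ((i : ℝ) / (k : ℝ) ^ M)) ^ 2
        = r ^ M * ((1 / r) ^ (M + 0) * Lfun k M u i 0) := by
          rw [hL0, ← mul_assoc, hrpow, one_mul]
      _ ≤ r ^ M * besovLocSq r k M i u := by
          rw [besovLocSq_eq]
          exact mul_le_mul_of_nonneg_left h0 (pow_nonneg hr0.le M)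
      _ ≤ r ^ M * Sloc := mul_le_mul_of_nonneg_left hLocle (pow_nonneg hr0.le M)
  -- sup bound at level-M grid points
  have hrS : 0 ≤ r ^ M * Sloc := mul_nonneg (pow_nonneg hr0.le M) hSlocnn
  have hB : ∀ j : ℕ, j ≤ k ^ M → (u ((j : ℝ) / (k : ℝ) ^ M)) ^ 2 ≤ 4 * (r ^ M * Sloc) := by
    intro j hj
    by_cases hu0 : u ((j : ℝ) / (k : ℝ) ^ M) = 0
    · rw [hu0]; nlinarith
    · have hmem : (j : ℝ) / (k : ℝ) ^ M ∈ Set.Icc a (a + ((k : ℝ) ^ M)⁻¹) := by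
        by_contra hmemc
        exact hu0 (ha _ ⟨by positivity,
          by rw [div_le_one (by positivity)]; exact_mod_cast hj⟩ hmemc)
      obtain ⟨hma, hmb⟩ := hmem
      have hhpos : (0:ℝ) < ((k : ℝ) ^ M)⁻¹ := by positivity
      have hkM3 : 3 ≤ k ^ M := le_trans hk (Nat.le_self_pow (by omega) k)
      rcases le_or_gt (j + 2) (k ^ M) with hcase | hcase
      · -- telescope to the right
        have hz : u (((j : ℝ) + 2) / (k : ℝ) ^ M) = 0 := by
          apply ha
          · constructor
            · positivity
            · rw [div_le_one (by positivity)]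
              have : ((j + 2 : ℕ) : ℝ) ≤ ((k ^ M : ℕ) : ℝ) := by exact_mod_cast hcase
              push_cast at this
              push_cast
              linarith
          · intro hc
            obtain ⟨_, hc2⟩ := hc
            have he : ((j : ℝ) + 2) / (k : ℝ) ^ M
                = (j : ℝ) / (k : ℝ) ^ M + 2 * ((k : ℝ) ^ M)⁻¹ := by
              field_simp
              try ring
            rw [he] at hc2
            linarith
        have hd1 := hD (j + 1) (Finset.mem_Icc.mpr ⟨by omega, by omega⟩)
        have hd2 := hD (j + 2) (Finset.mem_Icc.mpr ⟨by omega, by omega⟩)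
        push_cast at hd1 hd2
        have e1 : (j : ℝ) + 1 - 1 = (j : ℝ) := by ring
        have e2 : (j : ℝ) + 2 - 1 = (j : ℝ) + 1 := by ring
        rw [e1] at hd1
        rw [e2, hz] at hd2
        nlinarith [sq_nonneg (u ((j : ℝ) / (k : ℝ) ^ M) - 2 * u (((j : ℝ) + 1) / (k : ℝ) ^ M))]
      · -- telescope to the left
        obtain ⟨p, rfl⟩ : ∃ p, j = p + 2 := ⟨j - 2, by omega⟩
        have hz : u ((p : ℝ) / (k : ℝ) ^ M) = 0 := by
          apply ha
          · constructor
            · positivity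
            · rw [div_le_one (by positivity)]
              have : ((p : ℕ) : ℝ) ≤ ((k ^ M : ℕ) : ℝ) := by exact_mod_cast (by omega : p ≤ k ^ M)
              push_cast at this
              linarith
          · intro hc
            obtain ⟨hc1, _⟩ := hc
            have he : ((p + 2 : ℕ) : ℝ) / (k : ℝ) ^ M
                = (p : ℝ) / (k : ℝ) ^ M + 2 * ((k : ℝ) ^ M)⁻¹ := by
              push_cast
              field_simp
              try ring
            rw [he] at hma hmb
            linarith
        have hd1 := hD (p + 1) (Finset.mem_Icc.mpr ⟨by omega, by omega⟩)
        have hd2 := hD (p + 2) (Finset.mem_Icc.mpr ⟨by omega, by omega⟩)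
        push_cast at hd1 hd2 ⊢
        have e1 : (p : ℝ) + 1 - 1 = (p : ℝ) := by ring
        have e2 : (p : ℝ) + 2 - 1 = (p : ℝ) + 1 := by ring
        rw [e1, hz] at hd1
        rw [e2] at hd2
        nlinarith [sq_nonneg (u (((p : ℝ) + 2) / (k : ℝ) ^ M) - 2 * u (((p : ℝ) + 1) / (k : ℝ) ^ M))]
  -- head bound
  have hhead : ∀ m, m < M → (1 / r) ^ m * Sfun k u m ≤ 32 * r ^ (M - m) * Sloc := by
    intro m hm
    have hpowsplit : k ^ M = k ^ m * k ^ (M - m) := by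
      rw [← pow_add]
      congr 1
      omega
    have hcast : ∀ l : ℕ, (l : ℝ) / (k : ℝ) ^ m = ((l * k ^ (M - m) : ℕ) : ℝ) / (k : ℝ) ^ M := by
      intro l
      have hR : ((k : ℝ)) ^ M = (k : ℝ) ^ m * (k : ℝ) ^ (M - m) := by
        rw [← pow_add]
        congr 1
        omega
      push_cast
      rw [hR]
      field_simp
    have hB' : ∀ l : ℕ, l ≤ k ^ m → (u ((l : ℝ) / (k : ℝ) ^ m)) ^ 2 ≤ 4 * (r ^ M * Sloc) := by
      intro l hl
      rw [hcast l]
      apply hB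
      calc l * k ^ (M - m) ≤ k ^ m * k ^ (M - m) := Nat.mul_le_mul_right _ hl
        _ = k ^ M := hpowsplit.symm
    have huniq : ∀ l1 l2 : ℕ, l1 ≤ k ^ m → l2 ≤ k ^ m →
        u ((l1 : ℝ) / (k : ℝ) ^ m) ≠ 0 → u ((l2 : ℝ) / (k : ℝ) ^ m) ≠ 0 → l1 = l2 := by
      intro l1 l2 h1 h2 hu1 hu2
      by_contra hne
      have hmem : ∀ l : ℕ, l ≤ k ^ m → u ((l : ℝ) / (k : ℝ) ^ m) ≠ 0 →
          (l : ℝ) / (k : ℝ) ^ m ∈ Set.Icc a (a + ((k : ℝ) ^ M)⁻¹) := by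
        intro l hl hul
        by_contra hc
        exact hul (ha _ ⟨by positivity,
          by rw [div_le_one (by positivity)]; exact_mod_cast hl⟩ hc)
      obtain ⟨ha1, hb1⟩ := hmem l1 h1 hu1
      obtain ⟨ha2, hb2⟩ := hmem l2 h2 hu2
      have hone : (1:ℝ) ≤ |(l1 : ℝ) - (l2 : ℝ)| := by
        have h' : (l1 : ℤ) ≠ (l2 : ℤ) := by exact_mod_cast hne
        have h'' := Int.one_le_abs (sub_ne_zero.mpr h')
        calc (1:ℝ) = ((1 : ℤ) : ℝ) := by norm_num
          _ ≤ ((|l1 - l2| : ℤ) : ℝ) := by exact_mod_cast h''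
          _ = |(l1 : ℝ) - (l2 : ℝ)| := by push_cast; try ring
      have hdist : |(l1 : ℝ) / (k : ℝ) ^ m - (l2 : ℝ) / (k : ℝ) ^ m| ≤ ((k : ℝ) ^ M)⁻¹ := by
        rw [abs_sub_le_iff]
        constructor <;> linarith
      have habs : |(l1 : ℝ) / (k : ℝ) ^ m - (l2 : ℝ) / (k : ℝ) ^ m|
          = |(l1 : ℝ) - (l2 : ℝ)| / (k : ℝ) ^ m := by
        rw [div_sub_div_same, abs_div, abs_of_pos (by positivity : (0:ℝ) < (k : ℝ) ^ m)]
      rw [habs] at hdist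
      have hlow : ((k : ℝ) ^ m)⁻¹ ≤ |(l1 : ℝ) - (l2 : ℝ)| / (k : ℝ) ^ m := by
        rw [inv_eq_one_div, div_le_div_iff₀ (by positivity) (by positivity)]
        nlinarith [pow_pos hkR m]
      have hpow : (k : ℝ) ^ m < (k : ℝ) ^ M := by
        apply pow_lt_pow_right₀ (by exact_mod_cast (by omega : 1 < k)) hm
      have : ((k : ℝ) ^ M)⁻¹ < ((k : ℝ) ^ m)⁻¹ := by
        apply inv_strictAnti₀ (by positivity) hpow
      linarith
    by_cases hex : ∃ l0, l0 ≤ k ^ m ∧ u ((l0 : ℝ) / (k : ℝ) ^ m) ≠ 0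
    · obtain ⟨l0, hl0, hu0⟩ := hex
      have hsub : Sfun k u m
          = ∑ l ∈ Finset.range (k ^ m) ∩ {l0 - 1, l0},
              (u ((l : ℝ) / (k : ℝ) ^ m) - u (((l : ℝ) + 1) / (k : ℝ) ^ m)) ^ 2 := by
        unfold Sfun
        apply (Finset.sum_subset Finset.inter_subset_left ?_).symm
        intro x hx hnx
        have hx1 : x ∉ ({l0 - 1, l0} : Finset ℕ) := fun hmm => hnx (Finset.mem_inter.mpr ⟨hx, hmm⟩)
        have hxl : x ≠ l0 - 1 ∧ x ≠ l0 := by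
          constructor <;> intro hc <;> exact hx1 (by simp [hc])
        have hxr := Finset.mem_range.mp hx
        have h1 : u ((x : ℝ) / (k : ℝ) ^ m) = 0 := by
          by_contra hc
          exact hxl.2 (huniq x l0 (by omega) hl0 hc hu0)
        have h2 : u (((x : ℝ) + 1) / (k : ℝ) ^ m) = 0 := by
          by_contra hc
          have hcc : ((x + 1 : ℕ) : ℝ) = (x : ℝ) + 1 := by push_cast; ring
          have := huniq (x + 1) l0 (by omega) hl0 (by rw [hcc]; exact hc) hu0
          omega
        rw [h1, h2]
        simp
      have hcard : (Finset.range (k ^ m) ∩ {l0 - 1, l0}).card ≤ 2 := by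
        apply le_trans (Finset.card_le_card Finset.inter_subset_right)
        apply le_trans (Finset.card_insert_le _ _)
        simp
      have hterm : ∀ x ∈ Finset.range (k ^ m) ∩ {l0 - 1, l0},
          (u ((x : ℝ) / (k : ℝ) ^ m) - u (((x : ℝ) + 1) / (k : ℝ) ^ m)) ^ 2
            ≤ 16 * (r ^ M * Sloc) := by
        intro x hx
        have hxr : x < k ^ m := Finset.mem_range.mp (Finset.mem_inter.mp hx).1
        have t1 := hB' x (by omega)
        have t2 := hB' (x + 1) (by omega)
        have hcc : ((x + 1 : ℕ) : ℝ) = (x : ℝ) + 1 := by push_cast; ring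
        rw [hcc] at t2
        nlinarith [sq_nonneg (u ((x : ℝ) / (k : ℝ) ^ m) + u (((x : ℝ) + 1) / (k : ℝ) ^ m))]
      have hSle : Sfun k u m ≤ 32 * (r ^ M * Sloc) := by
        rw [hsub]
        calc ∑ l ∈ Finset.range (k ^ m) ∩ {l0 - 1, l0},
              (u ((l : ℝ) / (k : ℝ) ^ m) - u (((l : ℝ) + 1) / (k : ℝ) ^ m)) ^ 2
            ≤ (Finset.range (k ^ m) ∩ {l0 - 1, l0}).card • (16 * (r ^ M * Sloc)) :=
              Finset.sum_le_card_nsmul _ _ _ hterm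
          _ ≤ 2 • (16 * (r ^ M * Sloc)) := by
              apply nsmul_le_nsmul_left (by nlinarith) hcard
          _ = 32 * (r ^ M * Sloc) := by
              rw [nsmul_eq_mul]
              push_cast
              ring
      have hrid : (1 / r) ^ m * r ^ M = r ^ (M - m) := by
        have h3 : r ^ M = r ^ (M - m) * r ^ m := by
          rw [← pow_add]
          congr 1
          omega
        rw [h3, one_div, inv_pow]
        field_simp
      calc (1 / r) ^ m * Sfun k u m ≤ (1 / r) ^ m * (32 * (r ^ M * Sloc)) :=
            mul_le_mul_of_nonneg_left hSle (by positivity)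
        _ = 32 * ((1 / r) ^ m * r ^ M) * Sloc := by ring
        _ = 32 * r ^ (M - m) * Sloc := by rw [hrid]
    · push_neg at hex
      have hS0 : Sfun k u m = 0 := by
        apply Finset.sum_eq_zero
        intro l hl
        have hlr := Finset.mem_range.mp hl
        have h1 : u ((l : ℝ) / (k : ℝ) ^ m) = 0 := hex l (by omega)
        have hcc : ((l + 1 : ℕ) : ℝ) = (l : ℝ) + 1 := by push_cast; ring
        have h2 : u (((l : ℝ) + 1) / (k : ℝ) ^ m) = 0 := by
          rw [← hcc]; exact hex (l + 1) (by omega)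
        rw [h1, h2]
        simp
      rw [hS0, mul_zero]
      have : (0:ℝ) ≤ r ^ (M - m) := pow_nonneg hr0.le _
      nlinarith
  -- put everything together
  have hgeo : ∑ m ∈ Finset.range M, r ^ (M - m) ≤ 1 / (1 - r) := by
    have h1 : ∑ m ∈ Finset.range M, r ^ (M - m) = ∑ m ∈ Finset.range M, r ^ (m + 1) := by
      rw [← Finset.sum_range_reflect (fun m => r ^ (m + 1)) M]
      apply Finset.sum_congr rfl
      intro j hj
      have := Finset.mem_range.mp hj
      congr 1
      omega
    have hs : Summable (fun m : ℕ => r ^ m) := summable_geometric_of_lt_one hr0.le hr1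
    have h2 : ∑ m ∈ Finset.range M, r ^ m ≤ (1 - r)⁻¹ := by
      rw [← tsum_geometric_of_lt_one hr0.le hr1]
      exact Summable.sum_le_tsum _ (fun _ _ => pow_nonneg hr0.le _) hs
    have h3 : ∑ m ∈ Finset.range M, r ^ (m + 1) = r * ∑ m ∈ Finset.range M, r ^ m := by
      rw [Finset.mul_sum]
      apply Finset.sum_congr rfl
      intro j _
      rw [pow_succ]
      ring
    rw [h1, h3, one_div]
    nlinarith [Finset.sum_nonneg (fun (m : ℕ) (_ : m ∈ Finset.range M) => pow_nonneg hr0.le m),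
      inv_nonneg.mpr h1r.le]
  rw [hsplit]
  have hsum_head : ∑ m ∈ Finset.range M, (1 / r) ^ m * Sfun k u m
      ≤ 32 * (1 / (1 - r)) * Sloc := by
    calc ∑ m ∈ Finset.range M, (1 / r) ^ m * Sfun k u m
        ≤ ∑ m ∈ Finset.range M, 32 * r ^ (M - m) * Sloc :=
          Finset.sum_le_sum fun m hm => hhead m (Finset.mem_range.mp hm)
      _ = 32 * (∑ m ∈ Finset.range M, r ^ (M - m)) * Sloc := by
          simp only [Finset.mul_sum, Finset.sum_mul, mul_assoc]
      _ ≤ 32 * (1 / (1 - r)) * Sloc := by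
          apply mul_le_mul_of_nonneg_right _ hSlocnn
          nlinarith
  calc (∑ m ∈ Finset.range M, (1 / r) ^ m * Sfun k u m) + Sloc
      ≤ 32 * (1 / (1 - r)) * Sloc + Sloc := by linarith
    _ = (32 / (1 - r) + 1) * Sloc := by ring
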